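/- Let (Ω, ℙ) be a probability space, d a positive natural number, μ : Fin d → ℝ, and s : ℝ≥0 with s > 0. Suppose Y : Fin d → Ω → ℝ is a family of independent random variables (iIndepFun) with MeasureTheory.Measure.map (Y i) ℙ = ProbabilityTheory.gaussianReal (μ i) s for each i. Define σ_Y² = Real.log ((Real.exp s − 1) · (∑ i, Real.exp (2 · μ i)) / (∑ i, Real.exp (μ i))² + 1) and μ_Y = Real.log (∑ i, Real.exp (μ i)) + s/2 − σ_Y²/2. Then 𝔼[∑ i, Real.exp (Y i)] = Real.exp (μ_Y + σ_Y²/2) and 𝔼[(∑ i, Real.exp (Y i))²] = Real.exp (2·μ_Y + 2·σ_Y²); i.e., the Fenton–Wilkinson log-normal surrogate e^Z with Z ∼ N(μ_Y, σ_Y²) exactly matches the first two moments of the sum of log-normals ∑ i e^{Y i}. -/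

import Mathlib

open MeasureTheory ProbabilityTheory

lemma fw_pdf_shift (m : ℝ) {v : NNReal} (hv : v ≠ 0) (t x : ℝ) :
    Real.exp (t * x) * gaussianPDFReal m v x
      = Real.exp (t * m + t ^ 2 * v / 2) * gaussianPDFReal (m + t * v) v x := by
  have hv' : (0:ℝ) < v := lt_of_le_of_ne v.coe_nonneg (by exact_mod_cast hv.symm)
  unfold gaussianPDFReal
  rw [mul_left_comm, mul_left_comm (Real.exp _), ← Real.exp_add, ← Real.exp_add]
  congr 2
  field_simp
  ring

lemma fw_gaussianReal_eq_wd (m : ℝ) {v : NNReal} (hv : v ≠ 0) :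
    gaussianReal m v = (volume : Measure ℝ).withDensity
      (fun x => ((gaussianPDFReal m v x).toNNReal : ENNReal)) := by
  rw [gaussianReal_of_var_ne_zero m hv]
  rfl

lemma fw_integrable_exp_gaussian (m : ℝ) {v : NNReal} (hv : v ≠ 0) (t : ℝ) :
    Integrable (fun x => Real.exp (t * x)) (gaussianReal m v) := by
  rw [fw_gaussianReal_eq_wd m hv,
    integrable_withDensity_iff_integrable_smul
      ((measurable_gaussianPDFReal m v).real_toNNReal)]
  have : (fun x => (Real.toNNReal (gaussianPDFReal m v x)) • Real.exp (t * x))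
      = fun x => Real.exp (t * m + t ^ 2 * v / 2) * gaussianPDFReal (m + t * v) v x := by
    ext x
    rw [NNReal.smul_def, smul_eq_mul, Real.coe_toNNReal _ (gaussianPDFReal_nonneg m v x),
      mul_comm, fw_pdf_shift m hv]
  rw [this]
  exact (integrable_gaussianPDFReal _ v).const_mul _

lemma fw_integral_exp_gaussian (m : ℝ) {v : NNReal} (hv : v ≠ 0) (t : ℝ) :
    ∫ x, Real.exp (t * x) ∂(gaussianReal m v) = Real.exp (t * m + t ^ 2 * v / 2) := by
  rw [fw_gaussianReal_eq_wd m hv,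
    integral_withDensity_eq_integral_smul
      ((measurable_gaussianPDFReal m v).real_toNNReal)]
  have : (fun x => (Real.toNNReal (gaussianPDFReal m v x)) • Real.exp (t * x))
      = fun x => Real.exp (t * m + t ^ 2 * v / 2) * gaussianPDFReal (m + t * v) v x := by
    ext x
    rw [NNReal.smul_def, smul_eq_mul, Real.coe_toNNReal _ (gaussianPDFReal_nonneg m v x),
      mul_comm, fw_pdf_shift m hv]
  rw [this, integral_const_mul, integral_gaussianPDFReal_eq_one _ hv, mul_one]

section helpers
variable {Ω : Type*} [MeasureSpace Ω]

lemma fw_aemeas_of_map {f : Ω → ℝ} {m : ℝ} {v : NNReal}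
    (h : Measure.map f ℙ = gaussianReal m v) : AEMeasurable f ℙ := by
  by_contra hc
  rw [Measure.map_of_not_aemeasurable hc] at h
  exact (IsProbabilityMeasure.ne_zero (gaussianReal m v)) h.symm

lemma fw_integrable_exp_Y {f : Ω → ℝ} {m : ℝ} {v : NNReal} (hv : v ≠ 0)
    (h : Measure.map f ℙ = gaussianReal m v) (t : ℝ) :
    Integrable (fun ω => Real.exp (t * f ω)) ℙ := by
  have ham := fw_aemeas_of_map h
  have hint : Integrable (fun x => Real.exp (t * x)) (Measure.map f ℙ) := by
    rw [h]; exact fw_integrable_exp_gaussian m hv t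
  exact (integrable_map_measure hint.aestronglyMeasurable ham).mp hint

lemma fw_integral_exp_Y {f : Ω → ℝ} {m : ℝ} {v : NNReal} (hv : v ≠ 0)
    (h : Measure.map f ℙ = gaussianReal m v) (t : ℝ) :
    ∫ ω, Real.exp (t * f ω) ∂ℙ = Real.exp (t * m + t ^ 2 * v / 2) := by
  have ham := fw_aemeas_of_map h
  rw [show (∫ ω, Real.exp (t * f ω) ∂ℙ) = ∫ x, Real.exp (t * x) ∂(Measure.map f ℙ) from
      (integral_map ham
        (Real.measurable_exp.comp (measurable_const_mul t)).aestronglyMeasurable).symm,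
    h, fw_integral_exp_gaussian m hv t]
end helpers

/-- **Fenton–Wilkinson moment matching.** The log-normal surrogate `e^Z`, with
`Z ∼ N(μ_Y, σ_Y²)` as in the Fenton–Wilkinson approximation, exactly matches the first two
moments of the sum of independent log-normals `∑ i, e^(Y i)`. -/
theorem fenton_wilkinson_moment_matching {Ω : Type*} [MeasureSpace Ω]
    [IsProbabilityMeasure (ℙ : Measure Ω)] {d : ℕ} (hd : 0 < d)
    (μ : Fin d → ℝ) {s : NNReal} (hs : 0 < s) (Y : Fin d → Ω → ℝ)
    (hindep : iIndepFun Y ℙ)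
    (hmap : ∀ i, Measure.map (Y i) ℙ = gaussianReal (μ i) s) :
    (∫ ω, (∑ i, Real.exp (Y i ω)) ∂ℙ)
        = Real.exp ((Real.log (∑ i, Real.exp (μ i)) + (s : ℝ) / 2
            - Real.log ((Real.exp (s : ℝ) - 1) * (∑ i, Real.exp (2 * μ i))
                / (∑ i, Real.exp (μ i)) ^ 2 + 1) / 2)
          + Real.log ((Real.exp (s : ℝ) - 1) * (∑ i, Real.exp (2 * μ i))
              / (∑ i, Real.exp (μ i)) ^ 2 + 1) / 2) ∧
    (∫ ω, (∑ i, Real.exp (Y i ω)) ^ 2 ∂ℙ)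
        = Real.exp (2 * (Real.log (∑ i, Real.exp (μ i)) + (s : ℝ) / 2
            - Real.log ((Real.exp (s : ℝ) - 1) * (∑ i, Real.exp (2 * μ i))
                / (∑ i, Real.exp (μ i)) ^ 2 + 1) / 2)
          + 2 * Real.log ((Real.exp (s : ℝ) - 1) * (∑ i, Real.exp (2 * μ i))
              / (∑ i, Real.exp (μ i)) ^ 2 + 1)) := by
  have hsne : s ≠ 0 := hs.ne'
  have hne : (Finset.univ : Finset (Fin d)).Nonempty := by
    simpa [Finset.univ_nonempty_iff] using Fin.pos_iff_nonempty.mp hd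
  set A := ∑ i, Real.exp (μ i) with hAdef
  set B := ∑ i, Real.exp (2 * μ i) with hBdef
  have hA : 0 < A := Finset.sum_pos (fun i _ => Real.exp_pos _) hne
  have hB : 0 < B := Finset.sum_pos (fun i _ => Real.exp_pos _) hne
  set R := (Real.exp (s : ℝ) - 1) * B / A ^ 2 + 1 with hRdef
  have hRpos : 0 < R := by
    have h1 : (1:ℝ) ≤ Real.exp (s : ℝ) := Real.one_le_exp s.coe_nonneg
    have h2 : 0 ≤ (Real.exp (s : ℝ) - 1) * B / A ^ 2 :=
      div_nonneg (mul_nonneg (sub_nonneg.2 h1) hB.le) (sq_nonneg A)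
    rw [hRdef]; linarith
  -- basic moment facts
  have hmean : ∀ i, ∫ ω, Real.exp (Y i ω) ∂ℙ = Real.exp (μ i + (s:ℝ) / 2) := by
    intro i
    have := fw_integral_exp_Y hsne (hmap i) 1
    simpa using this
  have hint1 : ∀ i, Integrable (fun ω => Real.exp (Y i ω)) ℙ := by
    intro i
    simpa using fw_integrable_exp_Y hsne (hmap i) 1
  have hsqeq : ∀ i, (fun ω => Real.exp (Y i ω) * Real.exp (Y i ω))
      = fun ω => Real.exp (2 * Y i ω) := by
    intro i; ext ω; rw [← Real.exp_add, two_mul]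
  have hsq : ∀ i, ∫ ω, Real.exp (Y i ω) * Real.exp (Y i ω) ∂ℙ
      = Real.exp (2 * μ i + 2 * (s:ℝ)) := by
    intro i
    rw [hsqeq i]
    rw [fw_integral_exp_Y hsne (hmap i) 2]
    ring_nf
  have hint2 : ∀ i, Integrable (fun ω => Real.exp (Y i ω) * Real.exp (Y i ω)) ℙ := by
    intro i
    rw [hsqeq i]
    exact fw_integrable_exp_Y hsne (hmap i) 2
  have hXindep : ∀ i j, i ≠ j → IndepFun (fun ω => Real.exp (Y i ω))
      (fun ω => Real.exp (Y j ω)) ℙ := fun i j hij =>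
    (hindep.indepFun hij).comp Real.measurable_exp Real.measurable_exp
  have hprodint : ∀ i j, Integrable (fun ω => Real.exp (Y i ω) * Real.exp (Y j ω)) ℙ := by
    intro i j
    rcases eq_or_ne i j with rfl | hij
    · exact hint2 i
    · exact (hXindep i j hij).integrable_mul (hint1 i) (hint1 j)
  have hEij : ∀ i j, ∫ ω, Real.exp (Y i ω) * Real.exp (Y j ω) ∂ℙ
      = Real.exp (μ i + (s:ℝ)/2) * Real.exp (μ j + (s:ℝ)/2)
        + (if i = j then Real.exp (2 * μ i + 2 * (s:ℝ))
            - Real.exp (μ i + (s:ℝ)/2) * Real.exp (μ i + (s:ℝ)/2) else 0) := by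
    intro i j
    rcases eq_or_ne i j with rfl | hij
    · rw [if_pos rfl, hsq i]; ring
    · rw [if_neg hij, add_zero]
      have h := (hXindep i j hij).integral_fun_mul_eq_mul_integral (hint1 i).aestronglyMeasurable
          (hint1 j).aestronglyMeasurable
      rw [hmean i, hmean j] at h
      exact h
  -- first moment
  have part1 : (∫ ω, (∑ i, Real.exp (Y i ω)) ∂ℙ) = A * Real.exp ((s:ℝ)/2) := by
    rw [integral_finset_sum _ (fun i _ => hint1 i)]
    simp_rw [hmean, Real.exp_add]
    rw [← Finset.sum_mul]
  have hsumA : ∑ i, Real.exp (μ i + (s:ℝ)/2) = A * Real.exp ((s:ℝ)/2) := by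
    simp_rw [Real.exp_add]
    rw [← Finset.sum_mul]
  constructor
  · rw [part1, show (Real.log A + (s:ℝ) / 2 - Real.log R / 2) + Real.log R / 2
        = Real.log A + (s:ℝ)/2 by ring, Real.exp_add, Real.exp_log hA]
  · -- second moment
    have expand : ∀ ω : Ω, (∑ i, Real.exp (Y i ω)) ^ 2
        = ∑ i, ∑ j, Real.exp (Y i ω) * Real.exp (Y j ω) := by
      intro ω; rw [sq, Finset.sum_mul_sum]
    simp_rw [expand]
    rw [integral_finset_sum _ (fun i _ => integrable_finset_sum _ (fun j _ => hprodint i j))]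
    have step : ∀ i, ∫ ω, ∑ j, Real.exp (Y i ω) * Real.exp (Y j ω) ∂ℙ
        = ∑ j, ∫ ω, Real.exp (Y i ω) * Real.exp (Y j ω) ∂ℙ := fun i =>
      integral_finset_sum _ (fun j _ => hprodint i j)
    simp_rw [step, hEij, Finset.sum_add_distrib, Finset.sum_ite_eq, Finset.mem_univ, if_pos,
      ← Finset.mul_sum, hsumA, ← Finset.sum_mul]
    rw [hsumA]
    have hBsum : ∑ i, (Real.exp (2 * μ i + 2 * (s:ℝ))
        - Real.exp (μ i + (s:ℝ)/2) * Real.exp (μ i + (s:ℝ)/2))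
        = B * Real.exp (2*(s:ℝ)) - B * Real.exp (s:ℝ) := by
      rw [Finset.sum_sub_distrib]
      congr 1
      · simp_rw [Real.exp_add]; rw [← Finset.sum_mul]
      · have hpt : ∀ x : Fin d, Real.exp (μ x + (s:ℝ)/2) * Real.exp (μ x + (s:ℝ)/2)
            = Real.exp (2 * μ x) * Real.exp (s:ℝ) := fun x => by
          rw [← Real.exp_add, ← Real.exp_add]; ring_nf
        simp_rw [hpt]
        rw [← Finset.sum_mul]
    rw [hBsum, show 2 * (Real.log A + (s:ℝ) / 2 - Real.log R / 2) + 2 * Real.log R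
        = Real.log A + Real.log A + (s:ℝ) + Real.log R by ring,
      Real.exp_add, Real.exp_add, Real.exp_add, Real.exp_log hA, Real.exp_log hRpos, hRdef]
    have hexp2 : Real.exp (2 * (s:ℝ)) = Real.exp (s:ℝ) * Real.exp (s:ℝ) := by
      rw [← Real.exp_add]; ring_nf
    have hhalf : Real.exp ((s:ℝ)/2) * Real.exp ((s:ℝ)/2) = Real.exp (s:ℝ) := by
      rw [← Real.exp_add]; ring_nf
    have hAe : A * Real.exp ((s:ℝ)/2) * (A * Real.exp ((s:ℝ)/2)) = A ^ 2 * Real.exp (s:ℝ) := by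
      rw [← hhalf]; ring
    rw [hexp2, hAe]
    field_simp
    ring
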